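/- Let R be an infinite integral domain whose additive group R⁺ is a finitely generated abelian group, and let n ≥ 2 satisfy n ≤ |R*|, where R* is the group of units of R. Then UT_n(R) does not possess the R_∞-property: there exist n pairwise distinct units d₁,…,d_n ∈ R*, and for D = diag(d₁,…,d_n) the diagonal automorphism ψ_D : X ↦ D X D⁻¹ of UT_n(R) has finite Reidemeister number R(ψ_D) < ∞. -/

import Mathlib

open Matrix

/-- `x` and `y` are twisted conjugate with respect to the automorphism `φ`,
i.e. `x = z * y * (φ z)⁻¹` for some `z`. -/
def TwistedConj {G : Type*} [Group G] (φ : G ≃* G) (x y : G) : Prop :=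
  ∃ z : G, x = z * y * (φ z)⁻¹

/-- The Reidemeister number of an automorphism: the number of twisted conjugacy classes,
as an element of `ℕ∞ = ℕ ∪ {∞}` (`⊤` meaning infinitely many classes). -/
noncomputable def reidemeisterNumber {G : Type*} [Group G] (φ : G ≃* G) : ℕ∞ :=
  Cardinal.toENat (Cardinal.mk (Quot (TwistedConj φ)))

/-- A matrix is (upper) unitriangular if it has `1` on the diagonal and `0` below it. -/
def Matrix.IsUnitriangular {n : ℕ} {R : Type*} [CommRing R]
    (M : Matrix (Fin n) (Fin n) R) : Prop :=
  (∀ i, M i i = 1) ∧ ∀ ⦃i j : Fin n⦄, j < i → M i j = 0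

namespace Matrix.IsUnitriangular

variable {n : ℕ} {R : Type*} [CommRing R] {M N : Matrix (Fin n) (Fin n) R}

theorem blockTriangular (h : M.IsUnitriangular) : M.BlockTriangular (id : Fin n → Fin n) :=
  fun _ _ hij => h.2 hij

theorem one : (1 : Matrix (Fin n) (Fin n) R).IsUnitriangular :=
  ⟨fun i => by simp, fun i j hij => by simp [Matrix.one_apply, (ne_of_lt hij).symm]⟩

theorem diag_mul (hM : M.IsUnitriangular) (hN : N.BlockTriangular (id : Fin n → Fin n))
    (i : Fin n) : (M * N) i i = N i i := by
  rw [Matrix.mul_apply, Finset.sum_eq_single i]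
  · rw [hM.1 i, one_mul]
  · intro k _ hk
    rcases lt_or_gt_of_ne hk with hlt | hgt
    · rw [hM.2 hlt, zero_mul]
    · rw [hN (show (id i : Fin n) < id k from hgt), mul_zero]
  · intro h; exact absurd (Finset.mem_univ i) h

theorem mul (hM : M.IsUnitriangular) (hN : N.IsUnitriangular) : (M * N).IsUnitriangular := by
  constructor
  · intro i
    rw [hM.diag_mul hN.blockTriangular i, hN.1 i]
  · intro i j hij
    rw [Matrix.mul_apply]
    refine Finset.sum_eq_zero fun k _ => ?_
    rcases lt_or_ge k i with hk | hk
    · rw [hM.2 hk, zero_mul]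
    · rw [hN.2 (lt_of_lt_of_le hij hk), mul_zero]

end Matrix.IsUnitriangular

/-- The group `UT n R` of upper unitriangular `n × n` matrices over `R`, realized as a
subgroup of the group of units of the matrix ring. -/
def UT (n : ℕ) (R : Type*) [CommRing R] : Subgroup (Matrix (Fin n) (Fin n) R)ˣ where
  carrier := {u | Matrix.IsUnitriangular (u : Matrix (Fin n) (Fin n) R)}
  one_mem' := by simpa using Matrix.IsUnitriangular.one
  mul_mem' := by
    intro a b ha hb
    simpa using ha.mul hb
  inv_mem' := by
    intro u hu
    have hdet : IsUnit ((u : Matrix (Fin n) (Fin n) R)).det :=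
      (Matrix.isUnit_iff_isUnit_det _).mp u.isUnit
    haveI : Invertible (u : Matrix (Fin n) (Fin n) R) := u.invertible
    have htri : ((u : Matrix (Fin n) (Fin n) R)⁻¹).BlockTriangular (id : Fin n → Fin n) :=
      Matrix.blockTriangular_inv_of_blockTriangular hu.blockTriangular
    have hval : ((u⁻¹ : (Matrix (Fin n) (Fin n) R)ˣ) : Matrix (Fin n) (Fin n) R)
        = (u : Matrix (Fin n) (Fin n) R)⁻¹ := by
      simp [Matrix.coe_units_inv]
    constructor
    · intro i
      have h1 : ((u : Matrix (Fin n) (Fin n) R) * (u : Matrix (Fin n) (Fin n) R)⁻¹) i i = 1 := by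
        rw [Matrix.mul_nonsing_inv _ hdet]; simp
      rw [hval]
      rw [hu.diag_mul htri i] at h1
      exact h1
    · intro i j hij
      rw [hval]
      exact htri hij

/-- The underlying matrix of an element of `UT n R`. -/
def UTmat {n : ℕ} {R : Type*} [CommRing R] (X : UT n R) : Matrix (Fin n) (Fin n) R :=
  ((X : (Matrix (Fin n) (Fin n) R)ˣ) : Matrix (Fin n) (Fin n) R)

theorem twistedConj_trans {G : Type*} [Group G] {φ : G ≃* G} {x y z : G}
    (h1 : TwistedConj φ x y) (h2 : TwistedConj φ y z) : TwistedConj φ x z := by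
  obtain ⟨a, ha⟩ := h1
  obtain ⟨b, hb⟩ := h2
  exact ⟨a * b, by rw [ha, hb]; simp [mul_assoc]⟩

theorem reidemeisterNumber_ne_top {G : Type*} [Group G] (φ : G ≃* G)
    {α : Type*} [Finite α] (f : α → G) (hf : ∀ g : G, ∃ a : α, TwistedConj φ (f a) g) :
    reidemeisterNumber φ ≠ ⊤ := by
  have hsurj : Function.Surjective (fun a : α => Quot.mk (TwistedConj φ) (f a)) := by
    intro q
    induction q using Quot.ind with
    | _ g =>
      obtain ⟨a, ha⟩ := hf g
      exact ⟨a, Quot.sound ha⟩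
  have : Finite (Quot (TwistedConj φ)) := Finite.of_surjective _ hsurj
  simp only [reidemeisterNumber, ne_eq, Cardinal.toENat_eq_top, not_le]
  exact Cardinal.lt_aleph0_of_finite _

section DiagAut

variable {n : ℕ} {R : Type*} [CommRing R]

/-- The diagonal matrix with unit entries, as a unit of the matrix ring. -/
def diagUnit (d : Fin n → Rˣ) : (Matrix (Fin n) (Fin n) R)ˣ where
  val := Matrix.diagonal fun i => (d i : R)
  inv := Matrix.diagonal fun i => (((d i)⁻¹ : Rˣ) : R)
  val_inv := by
    rw [Matrix.diagonal_mul_diagonal]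
    have : (fun i => (d i : R) * (((d i)⁻¹ : Rˣ) : R)) = fun _ => (1 : R) := by
      funext i
      rw [← Units.val_mul, mul_inv_cancel, Units.val_one]
    rw [this, Matrix.diagonal_one]
  inv_val := by
    rw [Matrix.diagonal_mul_diagonal]
    have : (fun i => (((d i)⁻¹ : Rˣ) : R) * (d i : R)) = fun _ => (1 : R) := by
      funext i
      rw [← Units.val_mul, inv_mul_cancel, Units.val_one]
    rw [this, Matrix.diagonal_one]

theorem diagUnit_inv (d : Fin n → Rˣ) :
    (diagUnit d)⁻¹ = (diagUnit (fun i => (d i)⁻¹) : (Matrix (Fin n) (Fin n) R)ˣ) := by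
  ext
  rfl

theorem diagConj_mem (d : Fin n → Rˣ) (X : UT n R) :
    (((diagUnit d * (X : (Matrix (Fin n) (Fin n) R)ˣ) * (diagUnit d)⁻¹ :
      (Matrix (Fin n) (Fin n) R)ˣ)) : Matrix (Fin n) (Fin n) R).IsUnitriangular := by
  have hX := X.2
  have hco : (((diagUnit d * (X : (Matrix (Fin n) (Fin n) R)ˣ) * (diagUnit d)⁻¹ :
      (Matrix (Fin n) (Fin n) R)ˣ)) : Matrix (Fin n) (Fin n) R) =
      Matrix.diagonal (fun i => (d i : R)) * ((X : (Matrix (Fin n) (Fin n) R)ˣ) : Matrix (Fin n) (Fin n) R) *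
        Matrix.diagonal (fun i => (((d i)⁻¹ : Rˣ) : R)) := rfl
  rw [hco]
  constructor
  · intro i
    rw [Matrix.mul_diagonal, Matrix.diagonal_mul, hX.1 i, mul_one,
      ← Units.val_mul, mul_inv_cancel, Units.val_one]
  · intro i j hij
    rw [Matrix.mul_diagonal, Matrix.diagonal_mul, hX.2 hij]
    ring

/-- The diagonal automorphism of `UT n R` given by conjugation with `diagUnit d`. -/
def diagAut (d : Fin n → Rˣ) : MulAut (UT n R) where
  toFun X := ⟨diagUnit d * X * (diagUnit d)⁻¹, diagConj_mem d X⟩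
  invFun X := ⟨diagUnit (fun i => (d i)⁻¹) * X * (diagUnit (fun i => (d i)⁻¹))⁻¹,
    diagConj_mem _ X⟩
  left_inv X := by
    ext : 1
    show diagUnit (fun i => (d i)⁻¹) * (diagUnit d * (X : (Matrix (Fin n) (Fin n) R)ˣ) *
        (diagUnit d)⁻¹) * (diagUnit (fun i => (d i)⁻¹))⁻¹ = (X : (Matrix (Fin n) (Fin n) R)ˣ)
    rw [← diagUnit_inv d]
    group
  right_inv X := by
    ext : 1
    show diagUnit d * (diagUnit (fun i => (d i)⁻¹) * (X : (Matrix (Fin n) (Fin n) R)ˣ) *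
        (diagUnit (fun i => (d i)⁻¹))⁻¹) * (diagUnit d)⁻¹ = (X : (Matrix (Fin n) (Fin n) R)ˣ)
    rw [← diagUnit_inv d]
    group
  map_mul' X Y := by
    ext : 1
    show diagUnit d * ((X : (Matrix (Fin n) (Fin n) R)ˣ) * (Y : (Matrix (Fin n) (Fin n) R)ˣ)) *
        (diagUnit d)⁻¹ =
      (diagUnit d * (X : (Matrix (Fin n) (Fin n) R)ˣ) * (diagUnit d)⁻¹) *
        (diagUnit d * (Y : (Matrix (Fin n) (Fin n) R)ˣ) * (diagUnit d)⁻¹)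
    group

theorem diagAut_apply (d : Fin n → Rˣ) (X : UT n R) :
    UTmat (diagAut d X) =
      Matrix.diagonal (fun i => (d i : R)) * UTmat X *
        Matrix.diagonal (fun i => (((d i)⁻¹ : Rˣ) : R)) := rfl

end DiagAut

section Normalize

variable {n : ℕ} {R : Type*} [CommRing R]

theorem UTmat_unitriangular (X : UT n R) : (UTmat X).IsUnitriangular := X.2

theorem UTmat_mul (X Y : UT n R) : UTmat (X * Y) = UTmat X * UTmat Y := rfl

/-- Build an element of `UT n R` from a unitriangular matrix. -/
noncomputable def UT.mk (M : Matrix (Fin n) (Fin n) R) (h : M.IsUnitriangular) : UT n R := by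
  have hu : IsUnit M := by
    apply (Matrix.isUnit_iff_isUnit_det M).mpr
    rw [Matrix.det_of_upperTriangular h.blockTriangular]
    simp [h.1]
  exact ⟨hu.unit, show Matrix.IsUnitriangular ((hu.unit : (Matrix (Fin n) (Fin n) R)ˣ) :
    Matrix (Fin n) (Fin n) R) from by rw [hu.unit_spec]; exact h⟩

theorem UT.mk_mat (M : Matrix (Fin n) (Fin n) R) (h : M.IsUnitriangular) :
    UTmat (UT.mk M h) = M := IsUnit.unit_spec _

theorem UT.normalize (d : Fin n → Rˣ) (rep : Fin n → Fin n → R → R)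
    (hrep : ∀ i j x, ∃ c : R, x - rep i j x = (1 - (d i : R) * (((d j)⁻¹ : Rˣ) : R)) * c)
    (s : ℕ) (X : UT n R) :
    ∃ Y : UT n R, TwistedConj (diagAut d) Y X ∧
      ∀ i j : Fin n, (i : ℕ) < (j : ℕ) → (j : ℕ) ≤ (i : ℕ) + s →
        UTmat Y i j ∈ Set.range (rep i j) := by
  induction s with
  | zero =>
    exact ⟨X, ⟨1, by simp⟩, fun i j h1 h2 => absurd h2 (by omega)⟩
  | succ s IH =>
    obtain ⟨Y, hYX, hY⟩ := IH
    set B := UTmat Y with hBdef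
    have hB : B.IsUnitriangular := UTmat_unitriangular Y
    -- choose the correction amounts
    set t : Fin n → R := fun i => if h : (i : ℕ) + s + 1 < n then
        -(hrep i ⟨(i : ℕ) + s + 1, h⟩ (B i ⟨(i : ℕ) + s + 1, h⟩)).choose else 0 with htdef
    set N : Matrix (Fin n) (Fin n) R :=
      Matrix.of fun i j => if (j : ℕ) = (i : ℕ) + s + 1 then t i else 0 with hNdef
    have hNapp : ∀ i j : Fin n, N i j = if (j : ℕ) = (i : ℕ) + s + 1 then t i else 0 :=
      fun i j => rfl
    have htri : (1 + N).IsUnitriangular := by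
      constructor
      · intro i
        rw [Matrix.add_apply, Matrix.one_apply_eq, hNapp, if_neg (by omega), add_zero]
      · intro i j hij
        have hij' : (j : ℕ) < (i : ℕ) := hij
        rw [Matrix.add_apply, Matrix.one_apply_ne (ne_of_gt hij), hNapp,
          if_neg (by omega), add_zero]
    set z : UT n R := UT.mk (1 + N) htri with hzdef
    refine ⟨z * Y * ((diagAut d) z)⁻¹, twistedConj_trans ⟨z, rfl⟩ hYX, ?_⟩
    set Y' : UT n R := z * Y * ((diagAut d) z)⁻¹ with hY'def
    set A := UTmat Y' with hAdef
    have hA : A.IsUnitriangular := UTmat_unitriangular Y'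
    set N' : Matrix (Fin n) (Fin n) R :=
      Matrix.diagonal (fun i => (d i : R)) * N * Matrix.diagonal (fun i => (((d i)⁻¹ : Rˣ) : R))
      with hN'def
    have hN'app : ∀ k j : Fin n, N' k j = (d k : R) * N k j * (((d j)⁻¹ : Rˣ) : R) := by
      intro k j
      rw [hN'def, Matrix.mul_diagonal, Matrix.diagonal_mul]
    -- the key matrix identity
    have hgrp : Y' * (diagAut d) z = z * Y := by
      rw [hY'def, inv_mul_cancel_right]
    have hDD : Matrix.diagonal (fun i => (d i : R)) *
        Matrix.diagonal (fun i => (((d i)⁻¹ : Rˣ) : R)) = 1 := by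
      rw [Matrix.diagonal_mul_diagonal]
      have : (fun i => (d i : R) * (((d i)⁻¹ : Rˣ) : R)) = fun _ => (1 : R) := by
        funext i
        rw [← Units.val_mul, mul_inv_cancel, Units.val_one]
      rw [this, Matrix.diagonal_one]
    have heq : A + A * N' = B + N * B := by
      have h1 : UTmat Y' * UTmat ((diagAut d) z) = UTmat z * UTmat Y := by
        rw [← UTmat_mul, ← UTmat_mul, hgrp]
      have hz : UTmat z = 1 + N := by rw [hzdef, UT.mk_mat]
      rw [diagAut_apply, hz, ← hAdef, ← hBdef] at h1
      have h2 : Matrix.diagonal (fun i => (d i : R)) * (1 + N) *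
          Matrix.diagonal (fun i => (((d i)⁻¹ : Rˣ) : R)) = 1 + N' := by
        rw [mul_add, add_mul, mul_one, hDD, hN'def]
      rw [h2, mul_add, mul_one, add_mul, one_mul] at h1
      exact h1
    have happ : ∀ i j : Fin n, A i j + (A * N') i j = B i j + (N * B) i j := by
      intro i j
      have := congrFun (congrFun heq i) j
      simpa [Matrix.add_apply] using this
    -- entries at low levels are unchanged
    have hlow : ∀ i j : Fin n, (j : ℕ) ≤ (i : ℕ) + s → A i j = B i j := by
      intro i j hij
      have hAN' : (A * N') i j = 0 := by
        rw [Matrix.mul_apply]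
        refine Finset.sum_eq_zero fun k _ => ?_
        rw [hN'app, hNapp]
        by_cases hk : (j : ℕ) = (k : ℕ) + s + 1
        · rw [hA.2 (Fin.lt_def.mpr (by omega)), zero_mul]
        · rw [if_neg hk, mul_zero, zero_mul, mul_zero]
      have hNB : (N * B) i j = 0 := by
        rw [Matrix.mul_apply]
        refine Finset.sum_eq_zero fun k _ => ?_
        rw [hNapp]
        by_cases hk : (k : ℕ) = (i : ℕ) + s + 1
        · rw [hB.2 (Fin.lt_def.mpr (by omega)), mul_zero]
        · rw [if_neg hk, zero_mul]
      have := happ i j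
      rw [hAN', hNB, add_zero, add_zero] at this
      exact this
    -- entries at level s+1 get normalized
    have hhigh : ∀ i j : Fin n, (j : ℕ) = (i : ℕ) + s + 1 → A i j = rep i j (B i j) := by
      intro i j hij
      have hNB : (N * B) i j = t i := by
        rw [Matrix.mul_apply]
        rw [Finset.sum_eq_single j]
        · rw [hNapp, if_pos hij, hB.1 j, mul_one]
        · intro k _ hk
          rw [hNapp]
          have : ¬((k : ℕ) = (i : ℕ) + s + 1) := fun h => hk (Fin.ext (by omega))
          rw [if_neg this, zero_mul]
        · intro h; exact absurd (Finset.mem_univ j) h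
      have hAN' : (A * N') i j = (d i : R) * t i * (((d j)⁻¹ : Rˣ) : R) := by
        rw [Matrix.mul_apply]
        rw [Finset.sum_eq_single i]
        · rw [hN'app, hNapp, if_pos hij, hA.1 i, one_mul]
        · intro k _ hk
          rw [hN'app, hNapp]
          have : ¬((j : ℕ) = (k : ℕ) + s + 1) := fun h => hk (Fin.ext (by omega))
          rw [if_neg this, mul_zero, zero_mul, mul_zero]
        · intro h; exact absurd (Finset.mem_univ i) h
      have hkey := happ i j
      rw [hNB, hAN'] at hkey
      -- unfold t i
      have hn' : (i : ℕ) + s + 1 < n := by have := j.isLt; omega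
      have hjeq : (⟨(i : ℕ) + s + 1, hn'⟩ : Fin n) = j := Fin.ext (by simp only [Fin.val_mk]; omega)
      have hspec := (hrep i j (B i j)).choose_spec
      have ht : t i = -(hrep i j (B i j)).choose := by
        rw [htdef]
        simp only [dif_pos hn']
        congr 1; rw [hjeq]
      rw [ht] at hkey
      linear_combination hkey + hspec
    intro i j h1 h2
    rcases Nat.lt_or_ge (j : ℕ) ((i : ℕ) + s + 1) with hc | hc
    · rw [hlow i j (by omega)]
      exact hY i j h1 (by omega)
    · rw [hhigh i j (by omega)]
      exact ⟨B i j, rfl⟩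

end Normalize

theorem charZero_of_infinite_fg (R : Type) [CommRing R] [IsDomain R] [Infinite R]
    [AddGroup.FG R] : CharZero R := by
  obtain ⟨p, hp⟩ := CharP.exists R
  haveI := hp
  rcases CharP.char_is_prime_or_zero R p with hprime | h0
  · exfalso
    have htor : AddMonoid.IsTorsion R := by
      intro x
      rw [isOfFinAddOrder_iff_nsmul_eq_zero]
      exact ⟨p, hprime.pos, by simp [nsmul_eq_mul, CharP.cast_eq_zero R p]⟩
    exact absurd (AddCommGroup.finite_of_fg_torsion R htor)
      (by simpa using (Infinite.not_finite : ¬ Finite R))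
  · subst h0; exact CharP.charP_to_charZero R

theorem UT_not_R_infinity_of_card_units_ge
    (R : Type) [CommRing R] [IsDomain R] [Infinite R] [AddGroup.FG R]
    (n : ℕ) (hn2 : 2 ≤ n) (hn : (n : Cardinal) ≤ Cardinal.mk Rˣ) :
    ∃ d : Fin n → Rˣ, Function.Injective d ∧
      ∃ ψ : MulAut (UT n R),
        (∀ X : UT n R, UTmat (ψ X) =
          Matrix.diagonal (fun i => (d i : R)) * UTmat X *
            Matrix.diagonal (fun i => (((d i)⁻¹ : Rˣ) : R))) ∧
        reidemeisterNumber (ψ : (UT n R) ≃* (UT n R)) ≠ ⊤ := by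
  classical
  haveI : CharZero R := charZero_of_infinite_fg R
  haveI : Module.Finite ℤ R := Module.Finite.iff_addGroup_fg.mpr ‹_›
  haveI : Module.Free ℤ R := inferInstance
  -- choose pairwise distinct units
  obtain ⟨e⟩ := (Cardinal.le_def (Fin n) Rˣ).mp (by rwa [Cardinal.mk_fin])
  set d : Fin n → Rˣ := ⇑e with hd
  refine ⟨d, e.injective, diagAut d, fun X => diagAut_apply d X, ?_⟩
  -- the twist factors and their nonvanishing off the diagonal
  set r : Fin n → Fin n → R := fun i j => 1 - (d i : R) * (((d j)⁻¹ : Rˣ) : R) with hrdef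
  have hrne : ∀ i j : Fin n, i ≠ j → r i j ≠ 0 := by
    intro i j hij h0
    apply hij
    apply e.injective
    have h0' : (1 : R) - (d i : R) * (((d j)⁻¹ : Rˣ) : R) = 0 := h0
    have h1 : (d i : R) * (((d j)⁻¹ : Rˣ) : R) = 1 := (sub_eq_zero.mp h0').symm
    have h2 : (d i * (d j)⁻¹ : Rˣ) = 1 := Units.ext (by rw [Units.val_mul, Units.val_one]; exact h1)
    exact mul_inv_eq_one.mp h2
  -- representatives modulo r i j
  set rep : Fin n → Fin n → R → R := fun i j x =>
    if r i j ≠ 0 then Quotient.out (Ideal.Quotient.mk (Ideal.span {r i j}) x) else x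
    with hrepdef
  have hrep : ∀ (i j : Fin n) (x : R), ∃ c : R,
      x - rep i j x = (1 - (d i : R) * (((d j)⁻¹ : Rˣ) : R)) * c := by
    intro i j x
    by_cases h : r i j ≠ 0
    · have hmk : Ideal.Quotient.mk (Ideal.span {r i j}) (rep i j x) =
          Ideal.Quotient.mk (Ideal.span {r i j}) x := by
        simp only [hrepdef]
        rw [if_pos h]
        exact Quotient.out_eq' _
      have hmem : x - rep i j x ∈ Ideal.span {r i j} :=
        (Ideal.Quotient.eq).mp hmk.symm
      obtain ⟨c, hc⟩ := Ideal.mem_span_singleton.mp hmem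
      exact ⟨c, hc⟩
    · push_neg at h
      refine ⟨0, ?_⟩
      have hrx : rep i j x = x := by
        simp only [hrepdef]
        rw [if_neg (not_not_intro h)]
      have h0' : (1 : R) - (d i : R) * (((d j)⁻¹ : Rˣ) : R) = 0 := h
      rw [hrx, h0', zero_mul, sub_self]
  -- finiteness of the ranges of rep off the diagonal
  have hrange : ∀ i j : Fin n, i ≠ j → (Set.range (rep i j)).Finite := by
    intro i j hij
    haveI : Finite (R ⧸ Ideal.span {r i j}) :=
      (Ideal.finiteQuotientOfFreeOfNeBot _
        (by simpa [Ideal.span_singleton_eq_bot] using hrne i j hij))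
    have hsub : Set.range (rep i j) ⊆
        Set.range (Quotient.out : R ⧸ Ideal.span {r i j} → R) := by
      rintro _ ⟨x, rfl⟩
      simp only [hrepdef]
      rw [if_pos (hrne i j hij)]
      exact ⟨_, rfl⟩
    exact (Set.finite_range _).subset hsub
  -- the finite set of normal forms
  set F : Fin n → Fin n → Set R := fun i j =>
    if (i : ℕ) < (j : ℕ) then Set.range (rep i j) else {0, 1} with hFdef
  have hF : ∀ i j, (F i j).Finite := by
    intro i j
    simp only [hFdef]
    by_cases h : (i : ℕ) < (j : ℕ)
    · rw [if_pos h]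
      exact hrange i j (fun he => by simp [he] at h)
    · rw [if_neg h]
      exact (Set.finite_singleton 1).insert 0
  set T : Set (Matrix (Fin n) (Fin n) R) := {M | ∀ i j, M i j ∈ F i j} with hTdef
  have hT : T.Finite := by
    have : T = Set.pi Set.univ (fun i => Set.pi Set.univ (fun j => F i j)) := by
      ext M
      simp only [hTdef, Set.mem_setOf_eq]
      exact ⟨fun h => Set.mem_univ_pi.mpr fun i => Set.mem_univ_pi.mpr fun j => h i j,
        fun h i j => Set.mem_univ_pi.mp (Set.mem_univ_pi.mp h i) j⟩
    rw [this]
    exact Set.Finite.pi fun i => Set.Finite.pi fun j => hF i j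
  set S : Set (UT n R) := UTmat ⁻¹' T with hSdef
  have hinj : Function.Injective (UTmat : UT n R → Matrix (Fin n) (Fin n) R) :=
    fun X Y h => Subtype.ext (Units.ext h)
  have hSfin : S.Finite := hT.preimage hinj.injOn
  haveI : Finite ↥S := hSfin.to_subtype
  -- every element is twisted-conjugate to a normal form
  apply reidemeisterNumber_ne_top (diagAut d) (fun a : ↥S => (a : UT n R))
  intro g
  obtain ⟨Y, hYg, hYnorm⟩ := UT.normalize d rep hrep n g
  have hYS : Y ∈ S := by
    intro i j
    simp only [hFdef]
    by_cases h : (i : ℕ) < (j : ℕ)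
    · rw [if_pos h]
      exact hYnorm i j h (by have := j.isLt; omega)
    · rw [if_neg h]
      rcases eq_or_ne i j with he | he
      · subst he
        simp [(UTmat_unitriangular Y).1 i]
      · have : j < i := by
          rw [Fin.lt_def]
          rcases Nat.lt_or_ge (j : ℕ) (i : ℕ) with h' | h'
          · exact h'
          · exact absurd (Fin.ext (by omega)) he
        simp [(UTmat_unitriangular Y).2 this]
  exact ⟨⟨Y, hYS⟩, hYg⟩
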